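/- Let n ≥ 2. The transpose map T : H_r^n → H_c^n is a surjective linear isometry between Hilbert C*-modules that is not a triple homomorphism: there exist x, y, z ∈ H_r^n with T(x⟨y,z⟩) ≠ Tx⟨Ty, Tz⟩. -/

import Mathlib

open Matrix
open scoped Matrix.Norms.L2Operator

lemma aux_stdBasis_mul {n : ℕ} (e0 : Fin n) (A : Matrix (Fin n) (Fin n) ℂ)
    (hA : ∀ i j, i ≠ e0 → A i j = 0) :
    single e0 e0 (1:ℂ) * A = A := by
  ext i j
  rcases eq_or_ne i e0 with h | h
  · subst h
    simp [mul_apply, single, ite_and]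
  · simp [mul_apply, single, ite_and, hA i j h, Ne.symm h]

lemma aux_mul_conjTranspose {n : ℕ} (e0 : Fin n) (A : Matrix (Fin n) (Fin n) ℂ)
    (hA : ∀ i j, i ≠ e0 → A i j = 0) :
    A * Aᴴ = ((Aᵀᴴ * Aᵀ) e0 e0) • single e0 e0 (1:ℂ) := by
  ext i j
  rcases eq_or_ne i e0 with hi | hi
  · rcases eq_or_ne j e0 with hj | hj
    · subst hi; subst hj
      simp [mul_apply, single, conjTranspose_apply, transpose_apply, mul_comm]
    · simp [mul_apply, conjTranspose_apply, single, ite_and, Ne.symm hj,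
        fun k => hA j k hj]
  · simp [mul_apply, conjTranspose_apply, single, ite_and, Ne.symm hi,
      fun k => hA i k hi]

/-- For `n ≥ 2`, the transpose map `T : H_r^n → H_c^n` is a surjective linear isometry between
Hilbert C*-modules which is not a triple homomorphism: there are `x, y, z ∈ H_r^n` with
`T (x⟨y,z⟩) ≠ Tx⟨Ty,Tz⟩`.  Here `⟨A,B⟩ = Aᴴ * B` on `H_r^n`, while on `H_c^n` the inner product
is the `(0,0)` entry of `Aᴴ * B`, acting by scalar multiplication. -/
theorem transpose_row_to_column_not_triple_hom
    (n : ℕ) (hn : 2 ≤ n) :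
    -- `T` maps the row space into the column space
    (∀ A : Matrix (Fin n) (Fin n) ℂ, (∀ i j, i ≠ (⟨0, by omega⟩ : Fin n) → A i j = 0) →
      ∀ i j, j ≠ (⟨0, by omega⟩ : Fin n) → Aᵀ i j = 0) ∧
    -- `T` is linear
    (∀ (c : ℂ) (A B : Matrix (Fin n) (Fin n) ℂ), (c • A + B)ᵀ = c • Aᵀ + Bᵀ) ∧
    -- `T` is surjective onto the column space
    (∀ C : Matrix (Fin n) (Fin n) ℂ, (∀ i j, j ≠ (⟨0, by omega⟩ : Fin n) → C i j = 0) →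
      ∃ A : Matrix (Fin n) (Fin n) ℂ,
        (∀ i j, i ≠ (⟨0, by omega⟩ : Fin n) → A i j = 0) ∧ Aᵀ = C) ∧
    -- `T` is isometric for the Hilbert C*-module norms
    (∀ A : Matrix (Fin n) (Fin n) ℂ, (∀ i j, i ≠ (⟨0, by omega⟩ : Fin n) → A i j = 0) →
      Real.sqrt ‖(Aᵀᴴ * Aᵀ) (⟨0, by omega⟩ : Fin n) (⟨0, by omega⟩ : Fin n)‖ =
        Real.sqrt ‖Aᴴ * A‖) ∧
    -- `T` is not a triple homomorphism
    (∃ x y z : Matrix (Fin n) (Fin n) ℂ,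
      (∀ i j, i ≠ (⟨0, by omega⟩ : Fin n) → x i j = 0) ∧
      (∀ i j, i ≠ (⟨0, by omega⟩ : Fin n) → y i j = 0) ∧
      (∀ i j, i ≠ (⟨0, by omega⟩ : Fin n) → z i j = 0) ∧
      (x * (yᴴ * z))ᵀ ≠
        ((yᵀᴴ * zᵀ) (⟨0, by omega⟩ : Fin n) (⟨0, by omega⟩ : Fin n)) • xᵀ) := by
  refine ⟨?_, ?_, ?_, ?_, ?_⟩
  · intro A hA i j hj
    exact hA j i hj
  · intro c A B
    ext i j
    simp [transpose_apply]
  · intro C hC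
    exact ⟨Cᵀ, fun i j hi => hC j i hi, transpose_transpose C⟩
  · -- isometry
    intro A hA
    set e0 : Fin n := ⟨0, by omega⟩ with he0
    set c : ℂ := (Aᵀᴴ * Aᵀ) e0 e0 with hc
    have hP2 : (Aᴴ * A) * (Aᴴ * A) = c • (Aᴴ * A) := by
      calc (Aᴴ * A) * (Aᴴ * A) = Aᴴ * ((A * Aᴴ) * A) := by
            simp only [mul_assoc]
        _ = Aᴴ * ((c • single e0 e0 (1:ℂ)) * A) := by
            rw [← aux_mul_conjTranspose e0 A hA]
        _ = Aᴴ * (c • (single e0 e0 (1:ℂ) * A)) := by rw [smul_mul_assoc]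
        _ = Aᴴ * (c • A) := by rw [aux_stdBasis_mul e0 A hA]
        _ = c • (Aᴴ * A) := by rw [mul_smul_comm]
    have hsa : star (Aᴴ * A) = Aᴴ * A := by
      simp [star_eq_conjTranspose, conjTranspose_mul]
    have hkey : ‖Aᴴ * A‖ * ‖Aᴴ * A‖ = ‖c‖ * ‖Aᴴ * A‖ := by
      calc ‖Aᴴ * A‖ * ‖Aᴴ * A‖ = ‖star (Aᴴ * A) * (Aᴴ * A)‖ :=
            (CStarRing.norm_star_mul_self).symm
        _ = ‖c • (Aᴴ * A)‖ := by rw [hsa, hP2]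
        _ = ‖c‖ * ‖Aᴴ * A‖ := norm_smul c (Aᴴ * A)
    rcases eq_or_ne ‖Aᴴ * A‖ 0 with h0 | h0
    · have hA0 : A = 0 := by
        have := l2_opNorm_conjTranspose_mul_self A
        rw [h0] at this
        have : ‖A‖ = 0 := by nlinarith [norm_nonneg A]
        exact norm_eq_zero.mp this
      subst hA0
      simp only [h0, hc]
      simp
    · have : ‖Aᴴ * A‖ = ‖c‖ := mul_right_cancel₀ h0 hkey
      rw [this]
  · -- not a triple homomorphism
    have h01 : (⟨0, by omega⟩ : Fin n) ≠ ⟨1, by omega⟩ := by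
      simp [Fin.ext_iff]
    refine ⟨single ⟨0, by omega⟩ ⟨1, by omega⟩ 1,
      single ⟨0, by omega⟩ ⟨0, by omega⟩ 1,
      single ⟨0, by omega⟩ ⟨0, by omega⟩ 1,
      fun i j hi => by simp [single, Ne.symm hi],
      fun i j hi => by simp [single, Ne.symm hi],
      fun i j hi => by simp [single, Ne.symm hi], ?_⟩
    intro h
    have h2 := congrFun (congrFun h ⟨1, by omega⟩) ⟨0, by omega⟩
    simp [mul_apply, conjTranspose_apply, transpose_apply, single, ite_and,
      Matrix.smul_apply, h01, Ne.symm h01] at h2
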